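/- Let F be a finite field with |F| = q ≥ 2 and let p ∈ [0,1] be a real number. Consider the weighted sum over all pairs (k, ε) with k = (a,b,c,d,k13,k14,k47,k78,k25,k57) ∈ F^10 and ε = (ε1,ε2,ε3,ε4,ε5,ε7,ε8) ∈ Bool^7, where each pair has weight q^{-10} · ∏_i w(ε_i) with w(true) = 1−p and w(false) = p. Then the total weight of pairs for which the erased decoding matrix F̃_{t1} (with columns f̃3 and f̃8, where f̃1 = (a,b) if ε1 else 0, f̃2 = (c,d) if ε2 else 0, f̃3 = k13·f̃1 if ε3 else 0, f̃4 = k14·f̃1 if ε4 else 0, f̃5 = k25·f̃2 if ε5 else 0, f̃7 = k47·f̃4 + k57·f̃5 if ε7 else 0, f̃8 = k78·f̃7 if ε8 else 0) is invertible equals (q+1)(q-1)^6(1−p)^6/q^7. Hence the failure probability of sink t1 with channel failure probability p is P̃_e(t1) = 1 − (q+1)(q-1)^6(1−p)^6/q^7. -/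

import Mathlib

/- Active global encoding kernels of the butterfly network with channel erasures:
`fᵢt` is the usual linear-combination value when the Boolean `eᵢ` (channel `eᵢ`
successful) is true, and the zero vector otherwise. The source kernel is
`K_s = [[a,c],[b,d]]`, i.e. `f1 = (a,b)ᵀ`, `f2 = (c,d)ᵀ`. -/

def f1t {F : Type*} [Field F] (a b : F) (e1 : Bool) : Fin 2 → F :=
  if e1 then ![a, b] else 0

def f2t {F : Type*} [Field F] (c d : F) (e2 : Bool) : Fin 2 → F :=
  if e2 then ![c, d] else 0

def f3t {F : Type*} [Field F] (a b k13 : F) (e1 e3 : Bool) : Fin 2 → F :=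
  if e3 then k13 • f1t a b e1 else 0

def f4t {F : Type*} [Field F] (a b k14 : F) (e1 e4 : Bool) : Fin 2 → F :=
  if e4 then k14 • f1t a b e1 else 0

def f5t {F : Type*} [Field F] (c d k25 : F) (e2 e5 : Bool) : Fin 2 → F :=
  if e5 then k25 • f2t c d e2 else 0

def f6t {F : Type*} [Field F] (c d k26 : F) (e2 e6 : Bool) : Fin 2 → F :=
  if e6 then k26 • f2t c d e2 else 0

def f7t {F : Type*} [Field F] (a b c d k14 k47 k25 k57 : F) (e1 e2 e4 e5 e7 : Bool) :
    Fin 2 → F :=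
  if e7 then k47 • f4t a b k14 e1 e4 + k57 • f5t c d k25 e2 e5 else 0

def f8t {F : Type*} [Field F] (a b c d k14 k47 k78 k25 k57 : F) (e1 e2 e4 e5 e7 e8 : Bool) :
    Fin 2 → F :=
  if e8 then k78 • f7t a b c d k14 k47 k25 k57 e1 e2 e4 e5 e7 else 0

def f9t {F : Type*} [Field F] (a b c d k14 k47 k79 k25 k57 : F) (e1 e2 e4 e5 e7 e9 : Bool) :
    Fin 2 → F :=
  if e9 then k79 • f7t a b c d k14 k47 k25 k57 e1 e2 e4 e5 e7 else 0

/- The erased decoding matrix at sink `t₁`: columns `f̃3` and `f̃8`. -/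
def Ft1t {F : Type*} [Field F] (a b c d k13 k14 k47 k78 k25 k57 : F)
    (e1 e2 e3 e4 e5 e7 e8 : Bool) : Matrix (Fin 2) (Fin 2) F :=
  !![f3t a b k13 e1 e3 0, f8t a b c d k14 k47 k78 k25 k57 e1 e2 e4 e5 e7 e8 0;
     f3t a b k13 e1 e3 1, f8t a b c d k14 k47 k78 k25 k57 e1 e2 e4 e5 e7 e8 1]

/- The erased decoding matrix at sink `t₂`: columns `f̃6` and `f̃9`. -/
def Ft2t {F : Type*} [Field F] (a b c d k14 k47 k79 k25 k57 k26 : F)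
    (e1 e2 e4 e5 e6 e7 e9 : Bool) : Matrix (Fin 2) (Fin 2) F :=
  !![f6t c d k26 e2 e6 0, f9t a b c d k14 k47 k79 k25 k57 e1 e2 e4 e5 e7 e9 0;
     f6t c d k26 e2 e6 1, f9t a b c d k14 k47 k79 k25 k57 e1 e2 e4 e5 e7 e9 1]

section Aux
variable {F : Type*} [Field F] [Fintype F] [DecidableEq F]

set_option linter.unusedSectionVars false

theorem det_Ft1t (a b c d k13 k14 k47 k78 k25 k57 : F) (e1 e2 e3 e4 e5 e7 e8 : Bool) :
    (Ft1t a b c d k13 k14 k47 k78 k25 k57 e1 e2 e3 e4 e5 e7 e8).det =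
      if e1 && e2 && e3 && e5 && e7 && e8 then k13 * k78 * k25 * k57 * (a * d - b * c)
      else 0 := by
  cases e1 <;> cases e2 <;> cases e3 <;> cases e4 <;> cases e5 <;> cases e7 <;> cases e8 <;>
    simp [Ft1t, f3t, f8t, f7t, f5t, f4t, f2t, f1t, Matrix.det_fin_two_of,
      Matrix.cons_val_zero, Matrix.cons_val_one, Matrix.head_cons, Pi.smul_apply,
      smul_eq_mul, Pi.add_apply] <;> ring

theorem isUnit_Ft1t_iff (a b c d k13 k14 k47 k78 k25 k57 : F) (e1 e2 e3 e4 e5 e7 e8 : Bool) :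
    IsUnit (Ft1t a b c d k13 k14 k47 k78 k25 k57 e1 e2 e3 e4 e5 e7 e8) ↔
      ((e1 && e2 && e3 && e5 && e7 && e8) = true ∧
        (k13 ≠ 0 ∧ (k78 ≠ 0 ∧ (k25 ≠ 0 ∧ (k57 ≠ 0 ∧ a * d - b * c ≠ 0))))) := by
  rw [Matrix.isUnit_iff_isUnit_det, isUnit_iff_ne_zero, det_Ft1t]
  by_cases hb : (e1 && e2 && e3 && e5 && e7 && e8) = true
  · simp [hb, mul_ne_zero_iff, and_assoc]
  · simp [hb]

theorem sum_point (t : F) (K : ℝ) : ∑ x : F, (if x = t then K else 0) = K := by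
  rw [Finset.sum_ite_eq' Finset.univ t (fun _ => K)]; simp

theorem sum_ne_zero (q : ℕ) (hq : Fintype.card F = q) :
    ∑ x : F, (if x ≠ 0 then (1:ℝ) else 0) = (q : ℝ) - 1 := by
  have h : ∀ x : F, (if x ≠ 0 then (1:ℝ) else 0) = 1 - (if x = 0 then (1:ℝ) else 0) := by
    intro x; by_cases hx : x = 0 <;> simp [hx]
  rw [Finset.sum_congr rfl fun x _ => h x, Finset.sum_sub_distrib, sum_point (0:F) 1]
  simp [hq]

theorem sum_line (q : ℕ) (hq : Fintype.card F = q) (a b : F) (hab : ¬(a = 0 ∧ b = 0)) :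
    ∑ c : F, ∑ d : F, (if a * d - b * c = 0 then (1:ℝ) else 0) = (q : ℝ) := by
  by_cases ha : a = 0
  · have hb : b ≠ 0 := fun h => hab ⟨ha, h⟩
    have h : ∀ c d : F, (a * d - b * c = 0) ↔ c = 0 := by
      intro c d; subst ha; simp [hb, sub_eq_zero, eq_comm]
    calc ∑ c : F, ∑ d : F, (if a * d - b * c = 0 then (1:ℝ) else 0)
        = ∑ c : F, ∑ _d : F, (if c = 0 then (1:ℝ) else 0) := by
          refine Finset.sum_congr rfl fun c _ => Finset.sum_congr rfl fun d _ => ?_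
          simp [h c d]
      _ = ∑ c : F, (Fintype.card F : ℝ) * (if c = 0 then (1:ℝ) else 0) := by
          refine Finset.sum_congr rfl fun c _ => ?_
          rw [Finset.sum_const, Finset.card_univ, nsmul_eq_mul]
      _ = (q : ℝ) := by
          rw [← Finset.mul_sum, sum_point (0:F) (1:ℝ)]; simp [hq]
  · have h : ∀ c d : F, (a * d - b * c = 0) ↔ d = a⁻¹ * (b * c) := by
      intro c d
      rw [sub_eq_zero, eq_comm (b := b * c)]
      field_simp
      rw [eq_comm, mul_comm]
    calc ∑ c : F, ∑ d : F, (if a * d - b * c = 0 then (1:ℝ) else 0)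
        = ∑ c : F, ∑ d : F, (if d = a⁻¹ * (b * c) then (1:ℝ) else 0) := by
          refine Finset.sum_congr rfl fun c _ => Finset.sum_congr rfl fun d _ => ?_
          simp [h c d]
      _ = ∑ _c : F, (1:ℝ) := Finset.sum_congr rfl fun c _ => sum_point _ 1
      _ = (q : ℝ) := by simp [hq]

theorem sum_det (q : ℕ) (hq : Fintype.card F = q) :
    ∑ a : F, ∑ b : F, ∑ c : F, ∑ d : F, (if a * d - b * c ≠ 0 then (1:ℝ) else 0) =
      ((q : ℝ) ^ 2 - 1) * ((q : ℝ) ^ 2 - q) := by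
  have key : ∀ a b : F, ∑ c : F, ∑ d : F, (if a * d - b * c ≠ 0 then (1:ℝ) else 0) =
      if a = 0 ∧ b = 0 then 0 else (q : ℝ) ^ 2 - q := by
    intro a b
    have hsplit : ∀ c d : F, (if a * d - b * c ≠ 0 then (1:ℝ) else 0) =
        1 - (if a * d - b * c = 0 then (1:ℝ) else 0) := by
      intro c d; by_cases hx : a * d - b * c = 0 <;> simp [hx]
    by_cases hab : a = 0 ∧ b = 0
    · obtain ⟨ha, hb⟩ := hab; simp [ha, hb]
    · rw [if_neg hab]
      calc ∑ c : F, ∑ d : F, (if a * d - b * c ≠ 0 then (1:ℝ) else 0)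
          = ∑ c : F, ((∑ _d : F, (1:ℝ)) - ∑ d : F, (if a * d - b * c = 0 then (1:ℝ) else 0)) := by
            refine Finset.sum_congr rfl fun c _ => ?_
            rw [Finset.sum_congr rfl fun d _ => hsplit c d, Finset.sum_sub_distrib]
        _ = (∑ _c : F, ∑ _d : F, (1:ℝ)) - ∑ c : F, ∑ d : F, (if a * d - b * c = 0 then (1:ℝ) else 0) := by
            rw [Finset.sum_sub_distrib]
        _ = (q : ℝ) ^ 2 - q := by
            rw [sum_line q hq a b hab]; simp [hq]; ring
  rw [Finset.sum_congr rfl fun a _ => Finset.sum_congr rfl fun b _ => key a b]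
  have h2 : ∀ a b : F, (if a = 0 ∧ b = 0 then (0:ℝ) else (q : ℝ) ^ 2 - q) =
      ((q:ℝ)^2 - q) - (if a = 0 then (if b = 0 then ((q:ℝ)^2 - q) else 0) else 0) := by
    intro a b; by_cases ha : a = 0 <;> by_cases hb : b = 0 <;> simp [ha, hb]
  rw [Finset.sum_congr rfl fun a _ => Finset.sum_congr rfl fun b _ => h2 a b]
  have h3 : ∀ a : F, ∑ b : F, (((q:ℝ)^2 - q) - (if a = 0 then (if b = 0 then ((q:ℝ)^2 - q) else 0) else 0))
      = (q:ℝ) * ((q:ℝ)^2 - q) - (if a = 0 then ((q:ℝ)^2 - q) else 0) := by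
    intro a
    rw [Finset.sum_sub_distrib]
    by_cases ha : a = 0 <;> simp [ha, hq, sum_point (0:F) ((q:ℝ)^2 - q)] <;> ring
  rw [Finset.sum_congr rfl fun a _ => h3 a, Finset.sum_sub_distrib, sum_point (0:F) _]
  simp [hq]; ring

theorem sum_pi_cons {α : Type*} [Fintype α] {n : ℕ} (f : (Fin (n+1) → α) → ℝ) :
    ∑ v : Fin (n+1) → α, f v = ∑ x : α, ∑ v : Fin n → α, f (Fin.cons x v) := by
  rw [← (Fin.consEquiv (fun _ : Fin (n+1) => α)).sum_comp, Fintype.sum_prod_type]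
  rfl

theorem sum_pi10 {α : Type*} [Fintype α] (f : α→α→α→α→α→α→α→α→α→α→ℝ) :
    ∑ v : Fin 10 → α, f (v 0) (v 1) (v 2) (v 3) (v 4) (v 5) (v 6) (v 7) (v 8) (v 9) =
    ∑ x0:α, ∑ x1:α, ∑ x2:α, ∑ x3:α, ∑ x4:α, ∑ x5:α, ∑ x6:α, ∑ x7:α, ∑ x8:α, ∑ x9:α,
      f x0 x1 x2 x3 x4 x5 x6 x7 x8 x9 := by
  rw [sum_pi_cons]; refine Finset.sum_congr rfl fun x0 _ => ?_
  show ∑ v : Fin 9 → α, f x0 (v 0) (v 1) (v 2) (v 3) (v 4) (v 5) (v 6) (v 7) (v 8) = _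
  rw [sum_pi_cons]; refine Finset.sum_congr rfl fun x1 _ => ?_
  show ∑ v : Fin 8 → α, f x0 x1 (v 0) (v 1) (v 2) (v 3) (v 4) (v 5) (v 6) (v 7) = _
  rw [sum_pi_cons]; refine Finset.sum_congr rfl fun x2 _ => ?_
  show ∑ v : Fin 7 → α, f x0 x1 x2 (v 0) (v 1) (v 2) (v 3) (v 4) (v 5) (v 6) = _
  rw [sum_pi_cons]; refine Finset.sum_congr rfl fun x3 _ => ?_
  show ∑ v : Fin 6 → α, f x0 x1 x2 x3 (v 0) (v 1) (v 2) (v 3) (v 4) (v 5) = _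
  rw [sum_pi_cons]; refine Finset.sum_congr rfl fun x4 _ => ?_
  show ∑ v : Fin 5 → α, f x0 x1 x2 x3 x4 (v 0) (v 1) (v 2) (v 3) (v 4) = _
  rw [sum_pi_cons]; refine Finset.sum_congr rfl fun x5 _ => ?_
  show ∑ v : Fin 4 → α, f x0 x1 x2 x3 x4 x5 (v 0) (v 1) (v 2) (v 3) = _
  rw [sum_pi_cons]; refine Finset.sum_congr rfl fun x6 _ => ?_
  show ∑ v : Fin 3 → α, f x0 x1 x2 x3 x4 x5 x6 (v 0) (v 1) (v 2) = _
  rw [sum_pi_cons]; refine Finset.sum_congr rfl fun x7 _ => ?_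
  show ∑ v : Fin 2 → α, f x0 x1 x2 x3 x4 x5 x6 x7 (v 0) (v 1) = _
  rw [sum_pi_cons]; refine Finset.sum_congr rfl fun x8 _ => ?_
  show ∑ v : Fin 1 → α, f x0 x1 x2 x3 x4 x5 x6 x7 x8 (v 0) = _
  rw [sum_pi_cons]; refine Finset.sum_congr rfl fun x9 _ => ?_
  show ∑ _v : Fin 0 → α, f x0 x1 x2 x3 x4 x5 x6 x7 x8 x9 = _
  simp

theorem sum_IvFun (q : ℕ) (hq : Fintype.card F = q) :
    ∑ v : Fin 10 → F,
      ((if v 0 * v 3 - v 1 * v 2 ≠ 0 then (1:ℝ) else 0) *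
        ((if v 4 ≠ 0 then (1:ℝ) else 0) * ((if v 7 ≠ 0 then (1:ℝ) else 0) *
          ((if v 8 ≠ 0 then (1:ℝ) else 0) * (if v 9 ≠ 0 then (1:ℝ) else 0))))) =
      ((q:ℝ)^2 - 1) * ((q:ℝ)^2 - q) * ((q:ℝ) - 1)^4 * (q:ℝ)^2 := by
  rw [sum_pi10 (fun a b c d k13 _k14 _k47 k78 k25 k57 =>
    (if a * d - b * c ≠ 0 then (1:ℝ) else 0) *
      ((if k13 ≠ 0 then (1:ℝ) else 0) * ((if k78 ≠ 0 then (1:ℝ) else 0) *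
        ((if k25 ≠ 0 then (1:ℝ) else 0) * (if k57 ≠ 0 then (1:ℝ) else 0)))))]
  simp only [← Finset.mul_sum, ← Finset.sum_mul, sum_ne_zero q hq, Finset.sum_const,
    Finset.card_univ, hq, nsmul_eq_mul]
  rw [sum_det q hq]
  ring

theorem sum_pi_prod {α : Type*} [Fintype α] {n : ℕ} (f : Fin n → α → ℝ) :
    ∑ e : Fin n → α, ∏ i, f i (e i) = ∏ i, ∑ b : α, f i b := by
  rw [Finset.prod_univ_sum, Fintype.piFinset_univ]

theorem sum_JeFun (p : ℝ) :
    ∑ e : Fin 7 → Bool, (if (e 0 && e 1 && e 2 && e 4 && e 5 && e 6 : Bool) then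
        ∏ i : Fin 7, (if e i then 1 - p else p) else 0) = (1 - p)^6 := by
  have h : ∀ e : Fin 7 → Bool, (if (e 0 && e 1 && e 2 && e 4 && e 5 && e 6 : Bool) then
        ∏ i : Fin 7, (if e i then 1 - p else p) else 0) =
      ∏ i : Fin 7, (fun (i : Fin 7) (b : Bool) =>
        if b then 1 - p else if i = 3 then p else 0) i (e i) := by
    intro e
    cases h0 : e 0 <;> cases h1 : e 1 <;> cases h2 : e 2 <;> cases h3 : e 3 <;>
      cases h4 : e 4 <;> cases h5 : e 5 <;> cases h6 : e 6 <;>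
      simp [Fin.prod_univ_seven, h0, h1, h2, h3, h4, h5, h6]
  rw [Finset.sum_congr rfl fun e _ => h e,
    sum_pi_prod (fun (i : Fin 7) (b : Bool) => if b then 1 - p else if i = 3 then p else 0)]
  simp [Fin.prod_univ_seven, Fintype.sum_bool]
  ring

theorem sum_w_one (p : ℝ) :
    ∑ e : Fin 7 → Bool, ∏ i : Fin 7, (if e i then 1 - p else p) = 1 := by
  rw [sum_pi_prod (fun (_ : Fin 7) (b : Bool) => if b then 1 - p else p)]
  simp [Fintype.sum_bool]

end Aux

/- STATEMENT 8: with `q = |F| ≥ 2` and channel failure probability `p ∈ [0,1]`,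
summing over coefficient tuples `k = (a,b,c,d,k13,k14,k47,k78,k25,k57) ∈ F^10`
(encoded as `v 0, …, v 9`) and success indicators
`ε = (ε1,ε2,ε3,ε4,ε5,ε7,ε8) ∈ Bool^7` (encoded as `e 0, …, e 6`), each pair weighted by
`q⁻¹⁰ · ∏ᵢ w(εᵢ)` with `w(true) = 1-p`, `w(false) = p`, the total weight of pairs
making the erased decoding matrix `F̃_{t1} = (f̃3 f̃8)` invertible is
`(q+1)(q-1)^6(1-p)^6/q^7`; hence `P̃_e(t1) = 1 - (q+1)(q-1)^6(1-p)^6/q^7`. -/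
set_option maxHeartbeats 1600000 in
open Classical in
theorem butterfly_erased_sink_t1_failure_probability
    (F : Type*) [Field F] [Fintype F] (q : ℕ) (hq : Fintype.card F = q) (hq2 : 2 ≤ q)
    (p : ℝ) (hp : p ∈ Set.Icc (0 : ℝ) 1) :
    (∑ v : Fin 10 → F, ∑ e : Fin 7 → Bool,
        if IsUnit (Ft1t (v 0) (v 1) (v 2) (v 3) (v 4) (v 5) (v 6) (v 7) (v 8) (v 9)
            (e 0) (e 1) (e 2) (e 3) (e 4) (e 5) (e 6)) then
          (1 / (q : ℝ) ^ 10) * ∏ i : Fin 7, (if e i then 1 - p else p)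
        else 0) =
      ((q : ℝ) + 1) * ((q : ℝ) - 1) ^ 6 * (1 - p) ^ 6 / (q : ℝ) ^ 7 ∧
    (∑ v : Fin 10 → F, ∑ e : Fin 7 → Bool,
        if ¬ IsUnit (Ft1t (v 0) (v 1) (v 2) (v 3) (v 4) (v 5) (v 6) (v 7) (v 8) (v 9)
            (e 0) (e 1) (e 2) (e 3) (e 4) (e 5) (e 6)) then
          (1 / (q : ℝ) ^ 10) * ∏ i : Fin 7, (if e i then 1 - p else p)
        else 0) =
      1 - ((q : ℝ) + 1) * ((q : ℝ) - 1) ^ 6 * (1 - p) ^ 6 / (q : ℝ) ^ 7 := by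
  classical
  have hq0 : (q : ℝ) ≠ 0 := Nat.cast_ne_zero.mpr (by omega)
  have hpt : ∀ (v : Fin 10 → F) (e : Fin 7 → Bool),
      (if IsUnit (Ft1t (v 0) (v 1) (v 2) (v 3) (v 4) (v 5) (v 6) (v 7) (v 8) (v 9)
          (e 0) (e 1) (e 2) (e 3) (e 4) (e 5) (e 6)) then
        (1 / (q : ℝ) ^ 10) * ∏ i : Fin 7, (if e i then 1 - p else p) else 0) =
      ((if v 0 * v 3 - v 1 * v 2 ≠ 0 then (1:ℝ) else 0) *
        ((if v 4 ≠ 0 then (1:ℝ) else 0) * ((if v 7 ≠ 0 then (1:ℝ) else 0) *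
          ((if v 8 ≠ 0 then (1:ℝ) else 0) * (if v 9 ≠ 0 then (1:ℝ) else 0))))) *
      ((1 / (q : ℝ) ^ 10) *
        (if (e 0 && e 1 && e 2 && e 4 && e 5 && e 6 : Bool) then
          ∏ i : Fin 7, (if e i then 1 - p else p) else 0)) := by
    intro v e
    simp only [isUnit_Ft1t_iff]
    by_cases h1 : (e 0 && e 1 && e 2 && e 4 && e 5 && e 6) = true <;>
    by_cases h2 : v 4 ≠ 0 <;> by_cases h3 : v 7 ≠ 0 <;> by_cases h4 : v 8 ≠ 0 <;>
    by_cases h5 : v 9 ≠ 0 <;> by_cases h6 : v 0 * v 3 - v 1 * v 2 ≠ 0 <;>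
      simp [h1, h2, h3, h4, h5, h6] <;> ring
  have key : (∑ v : Fin 10 → F, ∑ e : Fin 7 → Bool,
      if IsUnit (Ft1t (v 0) (v 1) (v 2) (v 3) (v 4) (v 5) (v 6) (v 7) (v 8) (v 9)
          (e 0) (e 1) (e 2) (e 3) (e 4) (e 5) (e 6)) then
        (1 / (q : ℝ) ^ 10) * ∏ i : Fin 7, (if e i then 1 - p else p)
      else 0) =
      ((q : ℝ) + 1) * ((q : ℝ) - 1) ^ 6 * (1 - p) ^ 6 / (q : ℝ) ^ 7 := by
    rw [Finset.sum_congr rfl fun v _ => Finset.sum_congr rfl fun e _ => hpt v e]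
    simp only [← Finset.mul_sum, ← Finset.sum_mul]
    rw [sum_JeFun p, sum_IvFun q hq]
    field_simp
    ring
  refine ⟨key, ?_⟩
  have hcompl : (∑ v : Fin 10 → F, ∑ e : Fin 7 → Bool,
      if ¬ IsUnit (Ft1t (v 0) (v 1) (v 2) (v 3) (v 4) (v 5) (v 6) (v 7) (v 8) (v 9)
          (e 0) (e 1) (e 2) (e 3) (e 4) (e 5) (e 6)) then
        (1 / (q : ℝ) ^ 10) * ∏ i : Fin 7, (if e i then 1 - p else p)
      else 0) =
      1 - (∑ v : Fin 10 → F, ∑ e : Fin 7 → Bool,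
      if IsUnit (Ft1t (v 0) (v 1) (v 2) (v 3) (v 4) (v 5) (v 6) (v 7) (v 8) (v 9)
          (e 0) (e 1) (e 2) (e 3) (e 4) (e 5) (e 6)) then
        (1 / (q : ℝ) ^ 10) * ∏ i : Fin 7, (if e i then 1 - p else p)
      else 0) := by
    have h : ∀ (v : Fin 10 → F) (e : Fin 7 → Bool),
        (if ¬ IsUnit (Ft1t (v 0) (v 1) (v 2) (v 3) (v 4) (v 5) (v 6) (v 7) (v 8) (v 9)
            (e 0) (e 1) (e 2) (e 3) (e 4) (e 5) (e 6)) then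
          (1 / (q : ℝ) ^ 10) * ∏ i : Fin 7, (if e i then 1 - p else p) else 0) =
        ((1 / (q : ℝ) ^ 10) * ∏ i : Fin 7, (if e i then 1 - p else p)) -
        (if IsUnit (Ft1t (v 0) (v 1) (v 2) (v 3) (v 4) (v 5) (v 6) (v 7) (v 8) (v 9)
            (e 0) (e 1) (e 2) (e 3) (e 4) (e 5) (e 6)) then
          (1 / (q : ℝ) ^ 10) * ∏ i : Fin 7, (if e i then 1 - p else p) else 0) := by
      intro v e
      by_cases hM : IsUnit (Ft1t (v 0) (v 1) (v 2) (v 3) (v 4) (v 5) (v 6) (v 7) (v 8) (v 9)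
          (e 0) (e 1) (e 2) (e 3) (e 4) (e 5) (e 6)) <;> simp [hM]
    have he : (∑ e : Fin 7 → Bool, (1 / (q : ℝ) ^ 10) * ∏ i : Fin 7,
        (if e i then 1 - p else p)) = (1 / (q : ℝ) ^ 10) := by
      rw [← Finset.mul_sum, sum_w_one p, mul_one]
    have htot : (∑ _v : Fin 10 → F, ∑ e : Fin 7 → Bool,
        (1 / (q : ℝ) ^ 10) * ∏ i : Fin 7, (if e i then 1 - p else p)) = 1 := by
      rw [Finset.sum_congr rfl fun v _ => he, Finset.sum_const, Finset.card_univ,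
        nsmul_eq_mul]
      simp only [Fintype.card_pi, Finset.prod_const, Finset.card_univ, Fintype.card_fin, hq]
      push_cast
      field_simp
    rw [Finset.sum_congr rfl fun v _ => Finset.sum_congr rfl fun e _ => h v e]
    simp only [Finset.sum_sub_distrib]
    rw [htot]
  rw [hcompl, key]
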